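/- Elliptic Bailey-type general identity (Lemma on partial fractions): let [·] be a nonzero entire odd function satisfying the Riemann relation, δ ∈ ℂ*, m ≥ 1. Let a₀,…,a_{m+3} and d₀,…,d_{m-1} be complex parameters with Σ_p a_p - Σ_r d_r = 2δ and the d_r pairwise distinct modulo the zero set of [·]. Set b_p = δ - a_p and e_r = δ - d_r. Then for generic x, y: ∏_p[x+a_p]/([2x]∏_r[x+d_r]) · [x±y]/[(x+δ)±y] + ∏_p[-x+a_p]/([-2x]∏_r[-x+d_r]) · [x±y]/[(x-δ)±y] + ∏_p[y+b_p]/([2y]∏_r[y+e_r]) · [x±y]/[x±(y+δ)] + ∏_p[-y+b_p]/([-2y]∏_r[-y+e_r]) · [x±y]/[x±(y-δ)] + Σ_{r=0}^{m-1} (∏_p[a_p-d_r] / ∏_{r'≠r}[d_{r'}-d_r]) · [x±y]/([-d_r±x][-e_r±y]) = 0. -/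

import Mathlib

open Finset

noncomputable def T (f : ℂ → ℂ) {n : ℕ} (A B : Fin n → ℂ) (k : Fin n) : ℂ :=
  (∏ j, f (A k - B j)) / ∏ j ∈ univ.erase k, f (A k - A j)


lemma f_zero {f : ℂ → ℂ} (hodd : ∀ u : ℂ, f (-u) = -f u) : f 0 = 0 := by
  have h := hodd 0
  rw [neg_zero] at h
  linear_combination (1/2 : ℂ) * h

lemma prod_erase_ite {n : ℕ} (k : Fin n) (g : Fin n → ℂ) :
    ∏ j ∈ univ.erase k, g j = ∏ j, if j = k then 1 else g j := by
  rw [← Finset.mul_prod_erase univ (fun j => if j = k then 1 else g j) (mem_univ k),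
    if_pos rfl, one_mul]
  exact Finset.prod_congr rfl fun j hj => (if_neg (Finset.mem_erase.mp hj).1).symm

lemma prod_erase_castSucc {n : ℕ} (i : Fin n) (g : Fin (n+1) → ℂ) :
    ∏ j ∈ univ.erase i.castSucc, g j
      = g (Fin.last n) * ∏ j ∈ univ.erase i, g j.castSucc := by
  rw [prod_erase_ite, prod_erase_ite, Fin.prod_univ_castSucc]
  have h1 : (Fin.last n = i.castSucc) = False := by
    simp [Fin.ext_iff]; omega
  simp only [h1, if_false]
  rw [mul_comm]
  congr 1
  exact Finset.prod_congr rfl fun j _ => by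
    by_cases h : j = i
    · simp [h]
    · simp [h, fun hc => h (Fin.castSucc_injective n hc)]

lemma prod_erase_equiv {n : ℕ} (σ : Equiv.Perm (Fin n)) (i : Fin n) (g : Fin n → ℂ) :
    ∏ j ∈ univ.erase (σ i), g j = ∏ j ∈ univ.erase i, g (σ j) := by
  have himg : (univ.erase i).image σ = univ.erase (σ i) := by
    rw [Finset.image_erase σ.injective]
    congr 1
    exact Finset.image_univ_equiv σ
  rw [← himg, Finset.prod_image (fun x _ y _ h => σ.injective h)]

lemma key {f : ℂ → ℂ}
    (hR : ∀ x y u v : ℂ,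
      f (x + u) * f (x - u) * (f (y + v) * f (y - v)) -
        f (x + v) * f (x - v) * (f (y + u) * f (y - u)) =
      f (x + y) * f (x - y) * (f (u + v) * f (u - v)))
    (z p p' q q' : ℂ) :
    f (z - q) * f (z - q') * (f (q + q' - p - p') * f (p' - p)) =
      f (q' - p) * f (q - p) * (f (z - p') * f (z - (q + q' - p'))) +
      f (q' - p') * f (p' - q) * (f (z - p) * f (z - (q + q' - p))) := by
  have h := hR (z - (q + q')/2) ((q + q')/2 - p) ((q' - q)/2) ((q + q')/2 - p')
  ring_nf at h ⊢
  linear_combination h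

lemma myprodneg (m : ℕ) (g : Fin m → ℂ) : ∏ i, -g i = (-1)^m * ∏ i, g i := by
  have : ∀ i : Fin m, -g i = (-1) * g i := fun i => by ring
  rw [Finset.prod_congr rfl (fun i _ => this i), Finset.prod_mul_distrib,
    Finset.prod_const, Finset.card_univ, Fintype.card_fin]


lemma reduce {f : ℂ → ℂ} (hodd : ∀ u : ℂ, f (-u) = -f u)
    {n : ℕ} (A : Fin (n+2) → ℂ) (B' : Fin (n+1) → ℂ)
    (hdist : ∀ j k, j ≠ k → f (A j - A k) ≠ 0) :
    ∑ i : Fin (n+2), (∏ j, f (A i - B' j)) * f (A i - A (Fin.last (n+1))) /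
        ∏ j ∈ univ.erase i, f (A i - A j)
      = ∑ i : Fin (n+1), T f (fun j => A j.castSucc) B' i := by
  rw [Fin.sum_univ_castSucc]
  have hlast : (∏ j, f (A (Fin.last (n+1)) - B' j)) * f (A (Fin.last (n+1)) - A (Fin.last (n+1))) /
      ∏ j ∈ univ.erase (Fin.last (n+1)), f (A (Fin.last (n+1)) - A j) = 0 := by
    rw [sub_self, f_zero hodd]; simp
  rw [hlast, add_zero]
  apply Finset.sum_congr rfl
  intro i _
  rw [prod_erase_castSucc i (fun j => f (A i.castSucc - A j))]
  have hc : f (A i.castSucc - A (Fin.last (n+1))) ≠ 0 := by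
    apply hdist
    simp [Fin.ext_iff]; omega
  rw [T, mul_comm (f (A i.castSucc - A (Fin.last (n+1))))]
  rw [mul_div_mul_right _ _ hc]


lemma step_core {f : ℂ → ℂ} (hodd : ∀ u : ℂ, f (-u) = -f u)
    (hR : ∀ x y u v : ℂ,
      f (x + u) * f (x - u) * (f (y + v) * f (y - v)) -
        f (x + v) * f (x - v) * (f (y + u) * f (y - u)) =
      f (x + y) * f (x - y) * (f (u + v) * f (u - v)))
    {n : ℕ} (A B : Fin (n+3) → ℂ)
    (hsum : ∑ i, A i = ∑ i, B i)
    (hdist : ∀ j k, j ≠ k → f (A j - A k) ≠ 0)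
    (IH : ∀ A' B' : Fin (n+2) → ℂ, (∑ i, A' i = ∑ i, B' i) →
        (∀ j k, j ≠ k → f (A' j - A' k) ≠ 0) → ∑ k, T f A' B' k = 0)
    (hK : f (B (Fin.last (n+1)).castSucc + B (Fin.last (n+2))
            - A (Fin.last (n+1)).castSucc - A (Fin.last (n+2))) ≠ 0) :
    ∑ k, T f A B k = 0 := by
  set s1 : Fin (n+3) := (Fin.last (n+1)).castSucc with hs1
  set s2 : Fin (n+3) := Fin.last (n+2) with hs2
  have hs12 : s1 ≠ s2 := by simp [hs1, hs2, Fin.ext_iff]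
  set p := A s1 with hp
  set p' := A s2 with hp'
  set q := B s1 with hq
  set q' := B s2 with hq'
  set Ka := f (q + q' - p - p') * f (p' - p) with hKa_def
  set Kb := f (q' - p) * f (q - p) with hKb_def
  set Kc := f (q' - p') * f (p' - q) with hKc_def
  have hKa : Ka ≠ 0 := mul_ne_zero hK (hdist s2 s1 (Ne.symm hs12))
  set C1 := q + q' - p' with hC1
  set C2 := q + q' - p with hC2
  set B1 : Fin (n+2) → ℂ := Fin.snoc (fun j : Fin (n+1) => B j.castSucc.castSucc) C1 with hB1
  set B2 : Fin (n+2) → ℂ := Fin.snoc (fun j : Fin (n+1) => B j.castSucc.castSucc) C2 with hB2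
  set σ : Equiv.Perm (Fin (n+3)) := Equiv.swap s1 s2 with hσ
  have hDne : ∀ i : Fin (n+3), (∏ j ∈ univ.erase i, f (A i - A j)) ≠ 0 := by
    intro i
    exact Finset.prod_ne_zero_iff.mpr fun j hj =>
      hdist i j (fun h => (Finset.mem_erase.mp hj).1 h.symm)
  -- pointwise decomposition
  have hterm : ∀ i : Fin (n+3), T f A B i
      = Kb/Ka * ((∏ j, f (A i - B1 j)) * f (A i - p') / ∏ j ∈ univ.erase i, f (A i - A j))
      + Kc/Ka * ((∏ j, f (A i - B2 j)) * f (A i - p) / ∏ j ∈ univ.erase i, f (A i - A j)) := by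
    intro i
    have hN : (∏ j, f (A i - B j))
        = (∏ j : Fin (n+1), f (A i - B j.castSucc.castSucc)) * f (A i - q) * f (A i - q') := by
      rw [Fin.prod_univ_castSucc, Fin.prod_univ_castSucc]
    have hN1 : (∏ j, f (A i - B1 j))
        = (∏ j : Fin (n+1), f (A i - B j.castSucc.castSucc)) * f (A i - C1) := by
      rw [Fin.prod_univ_castSucc]
      simp [hB1, Fin.snoc_castSucc, Fin.snoc_last]
    have hN2 : (∏ j, f (A i - B2 j))
        = (∏ j : Fin (n+1), f (A i - B j.castSucc.castSucc)) * f (A i - C2) := by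
      rw [Fin.prod_univ_castSucc]
      simp [hB2, Fin.snoc_castSucc, Fin.snoc_last]
    have hkey := key hR (A i) p p' q q'
    rw [← hC1, ← hC2, ← hKb_def, ← hKc_def] at hkey
    have hD := hDne i
    rw [T, hN, hN1, hN2]
    rw [div_mul_div_comm, div_mul_div_comm, ← add_div]
    rw [div_eq_div_iff hD (mul_ne_zero hKa hD)]
    ring_nf
    ring_nf at hkey
    linear_combination (∏ j : Fin (n+1), f (A i - B j.castSucc.castSucc)) *
      (∏ j ∈ univ.erase i, f (A i - A j)) * hkey
  -- sums over B once and twice truncated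
  have hBtr : (∑ j : Fin (n+1), B j.castSucc.castSucc) = (∑ i, B i) - q - q' := by
    rw [Fin.sum_univ_castSucc (f := B), Fin.sum_univ_castSucc (f := fun j : Fin (n+2) => B j.castSucc)]
    rw [hq, hq', hs1, hs2]; ring
  have hAtr : (∑ i : Fin (n+2), A i.castSucc) = (∑ i, A i) - p' := by
    rw [Fin.sum_univ_castSucc (f := A), hp', hs2]; ring
  have hS1 : (∑ i : Fin (n+3),
      (∏ j, f (A i - B1 j)) * f (A i - p') / ∏ j ∈ univ.erase i, f (A i - A j)) = 0 := by
    rw [hp', hs2]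
    rw [reduce hodd A B1 hdist]
    apply IH
    · rw [hAtr]
      rw [Fin.sum_univ_castSucc (f := B1)]
      simp only [hB1, Fin.snoc_castSucc, Fin.snoc_last]
      rw [hBtr, hC1]
      linear_combination hsum
    · intro j k h
      exact hdist _ _ (fun hc => h (Fin.castSucc_injective _ hc))
  have hσs2 : σ s2 = s1 := Equiv.swap_apply_right s1 s2
  have hA2sum : (∑ i, A (σ i)) = ∑ i, A i := Equiv.sum_comp σ A
  have hS2 : (∑ i : Fin (n+3),
      (∏ j, f (A i - B2 j)) * f (A i - p) / ∏ j ∈ univ.erase i, f (A i - A j)) = 0 := by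
    rw [← Equiv.sum_comp σ (fun i => (∏ j, f (A i - B2 j)) * f (A i - p) /
        ∏ j ∈ univ.erase i, f (A i - A j))]
    have hrw : ∀ i : Fin (n+3),
        (∏ j, f (A (σ i) - B2 j)) * f (A (σ i) - p) / ∏ j ∈ univ.erase (σ i), f (A (σ i) - A j)
        = (∏ j, f (A (σ i) - B2 j)) * f (A (σ i) - A (σ (Fin.last (n+2)))) /
            ∏ j ∈ univ.erase i, f (A (σ i) - A (σ j)) := by
      intro i
      rw [prod_erase_equiv σ i (fun j => f (A (σ i) - A j))]
      rw [show σ (Fin.last (n+2)) = s1 from hσs2, ← hp]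
    rw [Finset.sum_congr rfl (fun i _ => hrw i)]
    rw [reduce hodd (fun i => A (σ i)) B2 (fun j k h => hdist _ _ (fun hc => h (σ.injective hc)))]
    apply IH
    · have : (∑ i : Fin (n+2), A (σ i.castSucc)) = (∑ i, A i) - p := by
        have h1 := Fin.sum_univ_castSucc (f := fun i => A (σ i))
        rw [hA2sum, hσs2, ← hp] at h1
        linear_combination -h1
      rw [this]
      rw [Fin.sum_univ_castSucc (f := B2)]
      simp only [hB2, Fin.snoc_castSucc, Fin.snoc_last]
      rw [hBtr, hC2]
      linear_combination hsum
    · intro j k h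
      exact hdist _ _ (fun hc => h (Fin.castSucc_injective _ (σ.injective hc)))
  rw [Finset.sum_congr rfl (fun i _ => hterm i), Finset.sum_add_distrib,
    ← Finset.mul_sum, ← Finset.mul_sum, hS1, hS2]
  ring


theorem master {f : ℂ → ℂ} (hne : f ≠ 0) (hent : Differentiable ℂ f)
    (hodd : ∀ u : ℂ, f (-u) = -f u)
    (hR : ∀ x y u v : ℂ,
      f (x + u) * f (x - u) * (f (y + v) * f (y - v)) -
        f (x + v) * f (x - v) * (f (y + u) * f (y - u)) =
      f (x + y) * f (x - y) * (f (u + v) * f (u - v))) :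
    ∀ n (A B : Fin n → ℂ), (∑ i, A i = ∑ i, B i) →
      (∀ j k, j ≠ k → f (A j - A k) ≠ 0) → ∑ k, T f A B k = 0 := by
  intro n
  induction n using Nat.strong_induction_on with
  | _ n IH =>
    match n with
    | 0 => intro A B _ _; simp
    | 1 =>
      intro A B hsum _
      have hAB : A 0 = B 0 := by simpa using hsum
      simp [T, Fin.prod_univ_one, hAB, f_zero hodd]
    | 2 =>
      intro A B hsum hdist
      have hsum2 : A 0 + A 1 = B 0 + B 1 := by
        simpa [Fin.sum_univ_two] using hsum
      have he0 : (univ : Finset (Fin 2)).erase 0 = {1} := by decide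
      have he1 : (univ : Finset (Fin 2)).erase 1 = {0} := by decide
      have e1 : A 1 - B 0 = -(A 0 - B 1) := by linear_combination hsum2
      have e2 : A 1 - B 1 = -(A 0 - B 0) := by linear_combination hsum2
      have e3 : A 1 - A 0 = -(A 0 - A 1) := by ring
      rw [Fin.sum_univ_two, T, T, he0, he1, Finset.prod_singleton, Finset.prod_singleton,
        Fin.prod_univ_two, Fin.prod_univ_two, e1, e2, e3, hodd, hodd, hodd]
      ring
    | (n+3) =>
      intro A B hsum hdist
      set s1 : Fin (n+3) := (Fin.last (n+1)).castSucc with hs1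
      set s2 : Fin (n+3) := Fin.last (n+2) with hs2
      have IH' : ∀ A' B' : Fin (n+2) → ℂ, (∑ i, A' i = ∑ i, B' i) →
          (∀ j k, j ≠ k → f (A' j - A' k) ≠ 0) → ∑ k, T f A' B' k = 0 :=
        IH (n+2) (by omega)
      by_cases hK : f (B s1 + B s2 - A s1 - A s2) ≠ 0
      · exact step_core hodd hR A B hsum hdist IH' hK
      push_neg at hK
      -- continuity argument
      have hs20 : s2 ≠ 0 := by simp [hs2, Fin.ext_iff]
      have hs10 : s1 ≠ 0 := by simp [hs1, Fin.ext_iff]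
      have hs12 : s1 ≠ s2 := by simp [hs1, hs2, Fin.ext_iff]
      set c : ℂ := B s1 + B s2 - A s1 - A s2 with hc
      set Bt : ℂ → Fin (n+3) → ℂ :=
        fun t j => B j + (if j = s2 then t else 0) + (if j = 0 then -t else 0) with hBt
      have hBt0 : Bt 0 = B := by funext j; simp [hBt]
      have hBtsum : ∀ t, ∑ i, Bt t i = ∑ i, B i := by
        intro t
        simp only [hBt, Finset.sum_add_distrib, Finset.sum_ite_eq' univ, mem_univ, if_true]
        ring
      have hBts1 : ∀ t, Bt t s1 = B s1 := by intro t; simp [hBt, hs12, hs10]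
      have hBts2 : ∀ t, Bt t s2 = B s2 + t := by intro t; simp [hBt, hs20]
      set G : ℂ → ℂ := fun t => ∑ k, T f A (Bt t) k with hG
      have h1 : ∀ t : ℂ, f (c + t) ≠ 0 → G t = 0 := by
        intro t ht
        apply step_core hodd hR A (Bt t) (by rw [hBtsum t]; exact hsum) hdist IH'
        rw [show Bt t s1 + Bt t s2 - A s1 - A s2 = c + t by
          rw [hBts1, hBts2, hc]; ring]
        exact ht
      have hganal : AnalyticAt ℂ (fun t : ℂ => f (c + t)) 0 :=
        (hent.comp ((differentiable_const c).add differentiable_id)).analyticAt 0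
      have h2 : ∀ᶠ t in nhdsWithin (0:ℂ) {(0:ℂ)}ᶜ, f (c + t) ≠ 0 := by
        rcases hganal.eventually_eq_zero_or_eventually_ne_zero with hz | hnz
        · exfalso
          have hall : ∀ z : ℂ, f z = 0 := by
            have hANhd : AnalyticOnNhd ℂ (fun t : ℂ => f (c + t)) Set.univ :=
              fun z _ => (hent.comp ((differentiable_const c).add differentiable_id)).analyticAt z
            have := hANhd.eqOn_zero_of_preconnected_of_eventuallyEq_zero
              isPreconnected_univ (Set.mem_univ (0:ℂ)) (hz.mono fun z h => h)
            intro z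
            have hz2 := this (Set.mem_univ (z - c))
            simpa using hz2
          exact hne (funext hall)
        · exact hnz
      have hcontG : Continuous G := by
        apply continuous_finset_sum
        intro k _
        apply Continuous.div_const
        apply continuous_finset_prod
        intro j _
        apply hent.continuous.comp
        apply (continuous_const).sub
        have heq : (fun t : ℂ => Bt t j)
            = fun t => B j + (if j = s2 then 1 else 0) * t + (if j = 0 then 1 else 0) * (-t) := by
          funext t; simp only [hBt]; split_ifs <;> ring
        rw [heq]
        exact (continuous_const.add (continuous_const.mul continuous_id)).add
          (continuous_const.mul continuous_neg)
      have htend1 : Filter.Tendsto G (nhdsWithin (0:ℂ) {(0:ℂ)}ᶜ) (nhds (G 0)) :=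
        (hcontG.continuousAt).tendsto.mono_left nhdsWithin_le_nhds
      have htend2 : Filter.Tendsto G (nhdsWithin (0:ℂ) {(0:ℂ)}ᶜ) (nhds 0) := by
        apply Filter.Tendsto.congr' (f₁ := fun _ => (0:ℂ))
        · exact (h2.mono fun t ht => (h1 t ht).symm)
        · exact tendsto_const_nhds
      have hfin : G 0 = 0 := tendsto_nhds_unique htend1 htend2
      have heq : ∑ k, T f A B k = G 0 := by simp only [hG, hBt0]
      rw [heq, hfin]


lemma den_nat {m : ℕ} (g : Fin (m+4) → ℂ) (i : Fin 4) :
    ∏ j ∈ univ.erase (Fin.natAdd m i), g j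
      = (∏ r : Fin m, g (Fin.castAdd 4 r)) * ∏ i' ∈ univ.erase i, g (Fin.natAdd m i') := by
  rw [prod_erase_ite, Fin.prod_univ_add]
  congr 1
  · refine Finset.prod_congr rfl fun r _ => if_neg ?_
    intro h
    have hv := congrArg Fin.val h
    have hr := r.isLt
    simp at hv
    omega
  · rw [prod_erase_ite]
    refine Finset.prod_congr rfl fun i' _ => ?_
    by_cases h : i' = i
    · simp [h]
    · rw [if_neg h, if_neg (fun hc => h (by
        have hv := congrArg Fin.val hc
        simp at hv
        exact Fin.ext (by omega)))]

lemma den_cast {m : ℕ} (g : Fin (m+4) → ℂ) (r : Fin m) :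
    ∏ j ∈ univ.erase (Fin.castAdd 4 r), g j
      = (∏ r' ∈ univ.erase r, g (Fin.castAdd 4 r')) * ∏ i : Fin 4, g (Fin.natAdd m i) := by
  rw [prod_erase_ite, Fin.prod_univ_add]
  congr 1
  · rw [prod_erase_ite]
    refine Finset.prod_congr rfl fun r' _ => ?_
    by_cases h : r' = r
    · simp [h]
    · rw [if_neg h, if_neg (fun hc => h (by
        have hv := congrArg Fin.val hc
        simp at hv
        exact Fin.ext (by omega)))]
  · refine Finset.prod_congr rfl fun i _ => if_neg ?_
    intro h
    have hv := congrArg Fin.val h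
    have hr := r.isLt
    simp at hv
    omega

lemma fin4_erase0 : ((univ : Finset (Fin 4)).erase 0) = {1, 2, 3} := by decide
lemma fin4_erase1 : ((univ : Finset (Fin 4)).erase 1) = {0, 2, 3} := by decide
lemma fin4_erase2 : ((univ : Finset (Fin 4)).erase 2) = {0, 1, 3} := by decide
lemma fin4_erase3 : ((univ : Finset (Fin 4)).erase 3) = {0, 1, 2} := by decide

/-- Elliptic Bailey-type general identity (the partial fraction lemma):
the five-term sum built from parameters `a₀,…,a_{m+3}`, `d₀,…,d_{m-1}` with
`Σ a_p - Σ d_r = 2δ`, `b_p = δ - a_p`, `e_r = δ - d_r`, vanishes. -/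
theorem elliptic_bailey_general_identity (f : ℂ → ℂ)
    (hne : f ≠ 0) (hent : Differentiable ℂ f)
    (hodd : ∀ u : ℂ, f (-u) = -f u)
    (hR : ∀ x y u v : ℂ,
      f (x + u) * f (x - u) * (f (y + v) * f (y - v)) -
        f (x + v) * f (x - v) * (f (y + u) * f (y - u)) =
      f (x + y) * f (x - y) * (f (u + v) * f (u - v)))
    (δ : ℂ) (hδ : δ ≠ 0) (m : ℕ) (hm : 1 ≤ m)
    (a : Fin (m + 4) → ℂ) (d : Fin m → ℂ)
    (hbal : (∑ p, a p) - ∑ r, d r = 2 * δ)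
    (b : Fin (m + 4) → ℂ) (hb : ∀ p, b p = δ - a p)
    (e : Fin m → ℂ) (he : ∀ r, e r = δ - d r)
    (hd : ∀ r r' : Fin m, r ≠ r' → f (d r - d r') ≠ 0)
    (x y : ℂ)
    (hx : f (2 * x) ≠ 0) (hy : f (2 * y) ≠ 0)
    (hxd : ∀ r, f (x + d r) ≠ 0) (hxd' : ∀ r, f (-x + d r) ≠ 0)
    (hye : ∀ r, f (y + e r) ≠ 0) (hye' : ∀ r, f (-y + e r) ≠ 0)
    (hdx : ∀ r, f (-d r + x) ≠ 0) (hdx' : ∀ r, f (-d r - x) ≠ 0)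
    (hey : ∀ r, f (-e r + y) ≠ 0) (hey' : ∀ r, f (-e r - y) ≠ 0)
    (hp1 : f (x + δ + y) ≠ 0) (hp2 : f (x + δ - y) ≠ 0)
    (hp3 : f (x - δ + y) ≠ 0) (hp4 : f (x - δ - y) ≠ 0)
    (hp5 : f (x + (y + δ)) ≠ 0) (hp6 : f (x - (y + δ)) ≠ 0)
    (hp7 : f (x + (y - δ)) ≠ 0) (hp8 : f (x - (y - δ)) ≠ 0) :
    (∏ p, f (x + a p)) / (f (2 * x) * ∏ r, f (x + d r)) *
        (f (x + y) * f (x - y) / (f (x + δ + y) * f (x + δ - y))) +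
      (∏ p, f (-x + a p)) / (f (-(2 * x)) * ∏ r, f (-x + d r)) *
        (f (x + y) * f (x - y) / (f (x - δ + y) * f (x - δ - y))) +
      (∏ p, f (y + b p)) / (f (2 * y) * ∏ r, f (y + e r)) *
        (f (x + y) * f (x - y) / (f (x + (y + δ)) * f (x - (y + δ)))) +
      (∏ p, f (-y + b p)) / (f (-(2 * y)) * ∏ r, f (-y + e r)) *
        (f (x + y) * f (x - y) / (f (x + (y - δ)) * f (x - (y - δ)))) +
      (∑ r, (∏ p, f (a p - d r)) / (∏ r' ∈ univ.erase r, f (d r' - d r)) *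
        (f (x + y) * f (x - y) /
          ((f (-d r + x) * f (-d r - x)) * (f (-e r + y) * f (-e r - y))))) = 0 := by
  have hsymm : ∀ u w : ℂ, f (u - w) ≠ 0 → f (w - u) ≠ 0 := fun u w h => by
    rw [show w - u = -(u - w) by ring, hodd]; exact neg_ne_zero.mpr h
  set v4 : Fin 4 → ℂ := ![δ/2 + x, δ/2 - x, y - δ/2, -y - δ/2] with hv4
  set A : Fin (m+4) → ℂ := Fin.addCases (fun r => δ/2 - d r) v4 with hA
  set B : Fin (m+4) → ℂ := fun p => δ/2 - a p with hB
  have hAc : ∀ r : Fin m, A (Fin.castAdd 4 r) = δ/2 - d r := fun r => by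
    simp [hA]
  have hA0 : A (Fin.natAdd m 0) = δ/2 + x := by simp [hA, hv4]
  have hA1 : A (Fin.natAdd m 1) = δ/2 - x := by simp [hA, hv4]
  have hA2 : A (Fin.natAdd m 2) = y - δ/2 := by simp [hA, hv4]
  have hA3 : A (Fin.natAdd m 3) = -y - δ/2 := by simp [hA, hv4]
  have hBp : ∀ p, B p = δ/2 - a p := fun p => rfl
  -- sum condition
  have hsumAB : ∑ i, A i = ∑ i, B i := by
    rw [Fin.sum_univ_add]
    have h1 : ∑ r : Fin m, A (Fin.castAdd 4 r) = (m : ℂ) * (δ/2) - ∑ r, d r := by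
      rw [Finset.sum_congr rfl (fun r _ => hAc r), Finset.sum_sub_distrib,
        Finset.sum_const, Finset.card_univ, Fintype.card_fin, nsmul_eq_mul]
    have h2 : ∑ i : Fin 4, A (Fin.natAdd m i) = 0 := by
      rw [Fin.sum_univ_four, hA0, hA1, hA2, hA3]; ring
    have h3 : ∑ i, B i = ((m : ℂ) + 4) * (δ/2) - ∑ p, a p := by
      simp only [hB]
      rw [Finset.sum_sub_distrib, Finset.sum_const, Finset.card_univ, Fintype.card_fin,
        nsmul_eq_mul]
      push_cast
      ring
    rw [h1, h2, h3]
    linear_combination hbal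
  -- distinctness
  have hAn : ∀ i : Fin 4, A (Fin.natAdd m i) = v4 i := fun i => by simp [hA]
  have hlr : ∀ (r : Fin m) (i : Fin 4), f (A (Fin.castAdd 4 r) - A (Fin.natAdd m i)) ≠ 0 := by
    intro r i
    rw [hAc, hAn]
    fin_cases i
    · have h : f (δ/2 - d r - (δ/2 + x)) ≠ 0 := by
        rw [show δ/2 - d r - (δ/2 + x) = -(x + d r) by ring, hodd]
        exact neg_ne_zero.mpr (hxd r)
      exact h
    · have h : f (δ/2 - d r - (δ/2 - x)) ≠ 0 := by
        rw [show δ/2 - d r - (δ/2 - x) = -d r + x by ring]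
        exact hdx r
      exact h
    · have h : f (δ/2 - d r - (y - δ/2)) ≠ 0 := by
        rw [show δ/2 - d r - (y - δ/2) = -(-e r + y) by rw [he]; ring, hodd]
        exact neg_ne_zero.mpr (hey r)
      exact h
    · have h : f (δ/2 - d r - (-y - δ/2)) ≠ 0 := by
        rw [show δ/2 - d r - (-y - δ/2) = -(-e r - y) by rw [he]; ring, hodd]
        exact neg_ne_zero.mpr (hey' r)
      exact h
  have hrr : ∀ i i' : Fin 4, i ≠ i' → f (A (Fin.natAdd m i) - A (Fin.natAdd m i')) ≠ 0 := by
    have h01 : f (A (Fin.natAdd m 0) - A (Fin.natAdd m 1)) ≠ 0 := by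
      rw [hA0, hA1, show δ/2 + x - (δ/2 - x) = 2*x by ring]; exact hx
    have h02 : f (A (Fin.natAdd m 0) - A (Fin.natAdd m 2)) ≠ 0 := by
      rw [hA0, hA2, show δ/2 + x - (y - δ/2) = x + δ - y by ring]; exact hp2
    have h03 : f (A (Fin.natAdd m 0) - A (Fin.natAdd m 3)) ≠ 0 := by
      rw [hA0, hA3, show δ/2 + x - (-y - δ/2) = x + δ + y by ring]; exact hp1
    have h12 : f (A (Fin.natAdd m 1) - A (Fin.natAdd m 2)) ≠ 0 := by
      rw [hA1, hA2, show δ/2 - x - (y - δ/2) = -(x - δ + y) by ring, hodd]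
      exact neg_ne_zero.mpr hp3
    have h13 : f (A (Fin.natAdd m 1) - A (Fin.natAdd m 3)) ≠ 0 := by
      rw [hA1, hA3, show δ/2 - x - (-y - δ/2) = -(x - δ - y) by ring, hodd]
      exact neg_ne_zero.mpr hp4
    have h23 : f (A (Fin.natAdd m 2) - A (Fin.natAdd m 3)) ≠ 0 := by
      rw [hA2, hA3, show y - δ/2 - (-y - δ/2) = 2*y by ring]; exact hy
    intro i i' hii
    fin_cases i <;> fin_cases i' <;>
      first
      | exact absurd rfl hii
      | assumption
      | exact hsymm _ _ h01
      | exact hsymm _ _ h02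
      | exact hsymm _ _ h03
      | exact hsymm _ _ h12
      | exact hsymm _ _ h13
      | exact hsymm _ _ h23
  have hdist : ∀ j k : Fin (m+4), j ≠ k → f (A j - A k) ≠ 0 := by
    intro j k
    induction j using Fin.addCases with
    | left r =>
      induction k using Fin.addCases with
      | left r' =>
        intro h
        have hr : r ≠ r' := fun hr => h (by rw [hr])
        rw [hAc, hAc, show δ/2 - d r - (δ/2 - d r') = -(d r - d r') by ring, hodd]
        exact neg_ne_zero.mpr (hd r r' hr)
      | right i => intro _; exact hlr r i
    | right i =>
      induction k using Fin.addCases with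
      | left r' => intro _; exact hsymm _ _ (hlr r' i)
      | right i' =>
        intro h
        exact hrr i i' (fun hii => h (by rw [hii]))
  have hmaster := master hne hent hodd hR (m+4) A B hsumAB hdist
  -- term computations
  have hT0 : T f A B (Fin.natAdd m 0) = (∏ p, f (x + a p)) /
      ((∏ r, f (x + d r)) * (f (2*x) * (f (x + δ - y) * f (x + δ + y)))) := by
    rw [T]
    have hnum : (∏ p, f (A (Fin.natAdd m 0) - B p)) = ∏ p, f (x + a p) :=
      Finset.prod_congr rfl fun p _ => by
        rw [show A (Fin.natAdd m 0) - B p = x + a p by rw [hA0, hBp]; ring]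
    have hden : (∏ j ∈ univ.erase (Fin.natAdd m 0), f (A (Fin.natAdd m 0) - A j))
        = (∏ r, f (x + d r)) * (f (2*x) * (f (x + δ - y) * f (x + δ + y))) := by
      rw [den_nat (fun j => f (A (Fin.natAdd m 0) - A j)) 0]
      have h1 : (∏ r, f (A (Fin.natAdd m 0) - A (Fin.castAdd 4 r))) = ∏ r, f (x + d r) :=
        Finset.prod_congr rfl fun r _ => by
          rw [show A (Fin.natAdd m 0) - A (Fin.castAdd 4 r) = x + d r by rw [hA0, hAc]; ring]
      rw [h1, fin4_erase0, Finset.prod_insert (by decide), Finset.prod_insert (by decide),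
        Finset.prod_singleton,
        show A (Fin.natAdd m 0) - A (Fin.natAdd m 1) = 2*x by rw [hA0, hA1]; ring,
        show A (Fin.natAdd m 0) - A (Fin.natAdd m 2) = x + δ - y by rw [hA0, hA2]; ring,
        show A (Fin.natAdd m 0) - A (Fin.natAdd m 3) = x + δ + y by rw [hA0, hA3]; ring]
    rw [hnum, hden]
  have hT1 : T f A B (Fin.natAdd m 1) = (∏ p, f (-x + a p)) /
      ((∏ r, f (-x + d r)) * (f (-(2*x)) * (f (x - δ + y) * f (x - δ - y)))) := by
    rw [T]
    have hnum : (∏ p, f (A (Fin.natAdd m 1) - B p)) = ∏ p, f (-x + a p) :=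
      Finset.prod_congr rfl fun p _ => by
        rw [show A (Fin.natAdd m 1) - B p = -x + a p by rw [hA1, hBp]; ring]
    have hden : (∏ j ∈ univ.erase (Fin.natAdd m 1), f (A (Fin.natAdd m 1) - A j))
        = (∏ r, f (-x + d r)) * (f (-(2*x)) * (f (x - δ + y) * f (x - δ - y))) := by
      rw [den_nat (fun j => f (A (Fin.natAdd m 1) - A j)) 1]
      have h1 : (∏ r, f (A (Fin.natAdd m 1) - A (Fin.castAdd 4 r))) = ∏ r, f (-x + d r) :=
        Finset.prod_congr rfl fun r _ => by
          rw [show A (Fin.natAdd m 1) - A (Fin.castAdd 4 r) = -x + d r by rw [hA1, hAc]; ring]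
      rw [h1, fin4_erase1, Finset.prod_insert (by decide), Finset.prod_insert (by decide),
        Finset.prod_singleton,
        show A (Fin.natAdd m 1) - A (Fin.natAdd m 2) = -(x - δ + y) by rw [hA1, hA2]; ring, hodd,
        show A (Fin.natAdd m 1) - A (Fin.natAdd m 3) = -(x - δ - y) by rw [hA1, hA3]; ring, hodd,
        show A (Fin.natAdd m 1) - A (Fin.natAdd m 0) = -(2*x) by rw [hA1, hA0]; ring]
      ring
    rw [hnum, hden]
  have hT2 : T f A B (Fin.natAdd m 2) = (∏ p, f (-y + b p)) /
      ((∏ r, f (-y + e r)) * (f (x - (y - δ)) * (f (x + (y - δ)) * f (-(2*y))))) := by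
    rw [T]
    have hnum : (∏ p, f (A (Fin.natAdd m 2) - B p)) = (-1:ℂ)^m * ∏ p, f (-y + b p) := by
      have h1 : (∏ p, f (A (Fin.natAdd m 2) - B p)) = ∏ p, -f (-y + b p) :=
        Finset.prod_congr rfl fun p _ => by
          rw [show A (Fin.natAdd m 2) - B p = -(-y + b p) by rw [hA2, hBp, hb]; ring, hodd]
      rw [h1, myprodneg, show ((-1:ℂ))^(m+4) = (-1)^m by rw [pow_add]; norm_num]
    have hden : (∏ j ∈ univ.erase (Fin.natAdd m 2), f (A (Fin.natAdd m 2) - A j))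
        = (-1:ℂ)^m * ((∏ r, f (-y + e r)) * (f (x - (y - δ)) * (f (x + (y - δ)) * f (-(2*y))))) := by
      rw [den_nat (fun j => f (A (Fin.natAdd m 2) - A j)) 2]
      have h1 : (∏ r, f (A (Fin.natAdd m 2) - A (Fin.castAdd 4 r))) = ∏ r, -f (-y + e r) :=
        Finset.prod_congr rfl fun r _ => by
          rw [show A (Fin.natAdd m 2) - A (Fin.castAdd 4 r) = -(-y + e r) by rw [hA2, hAc, he]; ring,
            hodd]
      rw [h1, myprodneg, fin4_erase2, Finset.prod_insert (by decide), Finset.prod_insert (by decide),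
        Finset.prod_singleton,
        show A (Fin.natAdd m 2) - A (Fin.natAdd m 0) = -(x - (y - δ)) by rw [hA2, hA0]; ring, hodd,
        show A (Fin.natAdd m 2) - A (Fin.natAdd m 1) = x + (y - δ) by rw [hA2, hA1]; ring,
        show A (Fin.natAdd m 2) - A (Fin.natAdd m 3) = -(-(2*y)) by rw [hA2, hA3]; ring, hodd]
      ring
    rw [hnum, hden, mul_div_mul_left _ _ (pow_ne_zero m (by norm_num : (-1:ℂ) ≠ 0))]
  have hT3 : T f A B (Fin.natAdd m 3) = (∏ p, f (y + b p)) /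
      ((∏ r, f (y + e r)) * (f (x + (y + δ)) * (f (x - (y + δ)) * f (2*y)))) := by
    rw [T]
    have hnum : (∏ p, f (A (Fin.natAdd m 3) - B p)) = (-1:ℂ)^m * ∏ p, f (y + b p) := by
      have h1 : (∏ p, f (A (Fin.natAdd m 3) - B p)) = ∏ p, -f (y + b p) :=
        Finset.prod_congr rfl fun p _ => by
          rw [show A (Fin.natAdd m 3) - B p = -(y + b p) by rw [hA3, hBp, hb]; ring, hodd]
      rw [h1, myprodneg, show ((-1:ℂ))^(m+4) = (-1)^m by rw [pow_add]; norm_num]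
    have hden : (∏ j ∈ univ.erase (Fin.natAdd m 3), f (A (Fin.natAdd m 3) - A j))
        = (-1:ℂ)^m * ((∏ r, f (y + e r)) * (f (x + (y + δ)) * (f (x - (y + δ)) * f (2*y)))) := by
      rw [den_nat (fun j => f (A (Fin.natAdd m 3) - A j)) 3]
      have h1 : (∏ r, f (A (Fin.natAdd m 3) - A (Fin.castAdd 4 r))) = ∏ r, -f (y + e r) :=
        Finset.prod_congr rfl fun r _ => by
          rw [show A (Fin.natAdd m 3) - A (Fin.castAdd 4 r) = -(y + e r) by rw [hA3, hAc, he]; ring,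
            hodd]
      rw [h1, myprodneg, fin4_erase3, Finset.prod_insert (by decide), Finset.prod_insert (by decide),
        Finset.prod_singleton,
        show A (Fin.natAdd m 3) - A (Fin.natAdd m 0) = -(x + (y + δ)) by rw [hA3, hA0]; ring, hodd,
        show A (Fin.natAdd m 3) - A (Fin.natAdd m 1) = x - (y + δ) by rw [hA3, hA1]; ring,
        show A (Fin.natAdd m 3) - A (Fin.natAdd m 2) = -(2*y) by rw [hA3, hA2]; ring, hodd]
      ring
    rw [hnum, hden, mul_div_mul_left _ _ (pow_ne_zero m (by norm_num : (-1:ℂ) ≠ 0))]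
  have hTc : ∀ r : Fin m, T f A B (Fin.castAdd 4 r) = (∏ p, f (a p - d r)) /
      ((∏ r' ∈ univ.erase r, f (d r' - d r)) *
        (f (-d r - x) * (f (-d r + x) * (f (-e r + y) * f (-e r - y))))) := by
    intro r
    rw [T]
    have hnum : (∏ p, f (A (Fin.castAdd 4 r) - B p)) = ∏ p, f (a p - d r) :=
      Finset.prod_congr rfl fun p _ => by
        rw [show A (Fin.castAdd 4 r) - B p = a p - d r by rw [hAc, hBp]; ring]
    have hden : (∏ j ∈ univ.erase (Fin.castAdd 4 r), f (A (Fin.castAdd 4 r) - A j))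
        = (∏ r' ∈ univ.erase r, f (d r' - d r)) *
          (f (-d r - x) * (f (-d r + x) * (f (-e r + y) * f (-e r - y)))) := by
      rw [den_cast (fun j => f (A (Fin.castAdd 4 r) - A j)) r]
      have h1 : (∏ r' ∈ univ.erase r, f (A (Fin.castAdd 4 r) - A (Fin.castAdd 4 r')))
          = ∏ r' ∈ univ.erase r, f (d r' - d r) :=
        Finset.prod_congr rfl fun r' _ => by
          rw [show A (Fin.castAdd 4 r) - A (Fin.castAdd 4 r') = d r' - d r by
            rw [hAc, hAc]; ring]
      rw [h1, Fin.prod_univ_four,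
        show A (Fin.castAdd 4 r) - A (Fin.natAdd m 0) = -d r - x by rw [hAc, hA0]; ring,
        show A (Fin.castAdd 4 r) - A (Fin.natAdd m 1) = -d r + x by rw [hAc, hA1]; ring,
        show A (Fin.castAdd 4 r) - A (Fin.natAdd m 2) = -(-e r + y) by rw [hAc, hA2, he]; ring, hodd,
        show A (Fin.castAdd 4 r) - A (Fin.natAdd m 3) = -(-e r - y) by rw [hAc, hA3, he]; ring, hodd]
      ring
    rw [hnum, hden]
  -- assembly
  rw [Fin.sum_univ_add (f := fun i => T f A B i), Fin.sum_univ_four] at hmaster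
  have e0 : (∏ p, f (x + a p)) / (f (2 * x) * ∏ r, f (x + d r)) *
        (f (x + y) * f (x - y) / (f (x + δ + y) * f (x + δ - y)))
      = f (x + y) * f (x - y) * T f A B (Fin.natAdd m 0) := by rw [hT0]; ring
  have e1 : (∏ p, f (-x + a p)) / (f (-(2 * x)) * ∏ r, f (-x + d r)) *
        (f (x + y) * f (x - y) / (f (x - δ + y) * f (x - δ - y)))
      = f (x + y) * f (x - y) * T f A B (Fin.natAdd m 1) := by rw [hT1]; ring
  have e3 : (∏ p, f (y + b p)) / (f (2 * y) * ∏ r, f (y + e r)) *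
        (f (x + y) * f (x - y) / (f (x + (y + δ)) * f (x - (y + δ))))
      = f (x + y) * f (x - y) * T f A B (Fin.natAdd m 3) := by rw [hT3]; ring
  have e2 : (∏ p, f (-y + b p)) / (f (-(2 * y)) * ∏ r, f (-y + e r)) *
        (f (x + y) * f (x - y) / (f (x + (y - δ)) * f (x - (y - δ))))
      = f (x + y) * f (x - y) * T f A B (Fin.natAdd m 2) := by rw [hT2]; ring
  have e4 : ∀ r : Fin m, (∏ p, f (a p - d r)) / (∏ r' ∈ univ.erase r, f (d r' - d r)) *
        (f (x + y) * f (x - y) /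
          ((f (-d r + x) * f (-d r - x)) * (f (-e r + y) * f (-e r - y))))
      = f (x + y) * f (x - y) * T f A B (Fin.castAdd 4 r) := fun r => by rw [hTc r]; ring
  rw [e0, e1, e3, e2, Finset.sum_congr rfl (fun r _ => e4 r), ← Finset.mul_sum]
  linear_combination (f (x + y) * f (x - y)) * hmaster
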